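/- Let w be a word of length n with exactly m blocks. Then the total number of Abelian-nonequivalent Abelian squares occurring as fragments of w is at most nm/2. -/

import Mathlib

/-- The number of blocks (maximal uniform fragments) of a word, i.e., the length of its
run-length encoding: obtained by collapsing adjacent equal letters. -/
def numBlocks {α : Type*} [DecidableEq α] (w : List α) : ℕ :=
  (w.destutter (· ≠ ·)).length

namespace AbelianSquares

variable {α : Type*} [DecidableEq α]

/-- `P` occurs at position `i` as the Parikh vector of the first half of an abelian square
of half-length `k` in `w`. -/
def Occ (w : List α) (P : Multiset α) (k i : ℕ) : Prop :=
  ∃ x u v y : List α, w = x ++ (u ++ (v ++ y)) ∧ x.length = i ∧ u.length = k ∧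
    v.length = k ∧ (u : Multiset α) = (v : Multiset α) ∧ (u : Multiset α) = P

lemma destutter'_append_singleton (l : List α) (a c : α) :
    (List.destutter' (· ≠ ·) a (l ++ [c])).length =
      (List.destutter' (· ≠ ·) a l).length + (if l.getLastD a = c then 0 else 1) := by
  induction l generalizing a with
  | nil =>
    by_cases h : a = c <;>
      simp [List.destutter'_singleton, List.destutter'_nil, h]
  | cons b l ih =>
    rw [List.cons_append, List.destutter'_cons, List.destutter'_cons, List.getLastD_cons]
    by_cases h : a ≠ b
    · rw [if_pos h, if_pos h, List.length_cons, List.length_cons, ih b]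
      omega
    · rw [if_neg h, if_neg h]
      rw [not_ne_iff] at h
      subst h
      exact ih a

lemma numBlocks_cons (a : α) (l : List α) :
    numBlocks (a :: l) = (List.destutter' (· ≠ ·) a l).length := by
  rfl

lemma numBlocks_append_singleton (a : α) (l : List α) (c : α) :
    numBlocks ((a :: l) ++ [c]) = numBlocks (a :: l) + (if l.getLastD a = c then 0 else 1) := by
  rw [List.cons_append, numBlocks_cons, numBlocks_cons, destutter'_append_singleton]

lemma numBlocks_nil : numBlocks ([] : List α) = 0 := rfl

lemma cons_replicate_swap (a : α) (e : ℕ) (L : List α) :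
    a :: (List.replicate e a ++ L) = List.replicate e a ++ (a :: L) := by
  rw [← List.cons_append, ← List.replicate_succ, List.replicate_succ', List.append_assoc,
    List.singleton_append]

lemma singleton_append_replicate (a : α) (n : ℕ) :
    [a] ++ List.replicate n a = List.replicate n a ++ [a] := by
  rw [List.singleton_append, ← List.replicate_succ, List.replicate_succ']

lemma one_le_numBlocks {l : List α} (h : l ≠ []) : 1 ≤ numBlocks l := by
  obtain ⟨a, l, rfl⟩ := List.exists_cons_of_ne_nil h
  rw [numBlocks_cons]
  exact List.length_pos_iff.2 (List.destutter'_ne_nil _ _)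

lemma numBlocks_le_append (l t : List α) : numBlocks l ≤ numBlocks (l ++ t) := by
  induction t generalizing l with
  | nil => simp
  | cons c t ih =>
    rcases eq_or_ne l [] with rfl | hl
    · simp [numBlocks_nil]
    · obtain ⟨a, l, rfl⟩ := List.exists_cons_of_ne_nil hl
      calc numBlocks (a :: l) ≤ numBlocks ((a :: l) ++ [c]) := by
            rw [numBlocks_append_singleton]; split_ifs <;> omega
        _ ≤ numBlocks (((a :: l) ++ [c]) ++ t) := ih _
        _ = numBlocks ((a :: l) ++ (c :: t)) := by rw [List.append_assoc]; rfl

lemma numBlocks_key {l t : List α} (hl : l ≠ []) (h : numBlocks (l ++ t) = numBlocks l) :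
    ∃ a : α, (∃ l0, l = l0 ++ [a]) ∧ t = List.replicate t.length a := by
  induction t generalizing l with
  | nil =>
    exact ⟨l.getLast hl, ⟨l.dropLast, (List.dropLast_append_getLast hl).symm⟩, by simp⟩
  | cons c t ih =>
    obtain ⟨a, l', rfl⟩ := List.exists_cons_of_ne_nil hl
    have hassoc : (a :: l') ++ (c :: t) = ((a :: l') ++ [c]) ++ t := by
      rw [List.append_assoc]; rfl
    have h1 : numBlocks ((a :: l') ++ [c]) ≤ numBlocks ((a :: l') ++ (c :: t)) := by
      rw [hassoc]; exact numBlocks_le_append _ _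
    rw [h, numBlocks_append_singleton] at h1
    have hc : l'.getLastD a = c := by by_contra hc; rw [if_neg hc] at h1; omega
    have h2 : numBlocks (((a :: l') ++ [c]) ++ t) = numBlocks ((a :: l') ++ [c]) := by
      rw [← hassoc, h, numBlocks_append_singleton, if_pos hc]
      omega
    obtain ⟨b, ⟨l0, hl0⟩, ht⟩ := ih (l := (a :: l') ++ [c]) (by simp) h2
    have hbc : b = c := by
      have := (List.getLast?_concat (a := c) (l := a :: l')).symm.trans
        (congrArg List.getLast? hl0)
      rw [List.getLast?_concat] at this
      exact (Option.some_injective _ this).symm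
    subst hbc
    refine ⟨b, ⟨(a :: l').dropLast, ?_⟩, ?_⟩
    · have : (a :: l').getLast (by simp) = b := by
        rw [List.getLast_eq_getLastD]; exact hc
      rw [← this, List.dropLast_append_getLast]
    · rw [List.length_cons, List.replicate_succ, ← ht]

lemma eq_replicate_of_coe_add {A : List α} {s : Multiset α} {N : ℕ} {a : α}
    (h : (A : Multiset α) + s = Multiset.replicate N a) :
    A = List.replicate A.length a := by
  rw [List.eq_replicate_iff]
  refine ⟨rfl, fun b hb => ?_⟩
  refine Multiset.eq_of_mem_replicate (n := N) (a := a) ?_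
  rw [← h]
  exact Multiset.mem_add.2 (Or.inl (by exact_mod_cast hb))

lemma Occ.length_le {w : List α} {P : Multiset α} {k i : ℕ} (h : Occ w P k i) :
    i + 2 * k ≤ w.length := by
  obtain ⟨x, u, v, y, hw, hx, hu, hv, -, -⟩ := h
  rw [hw]; simp only [List.length_append]; omega

lemma Occ.parikh_eq {w : List α} {P : Multiset α} {k i : ℕ} (h : Occ w P k i) :
    P = (((w.drop i).take k : List α) : Multiset α) := by
  obtain ⟨x, u, v, y, hw, hx, hu, hv, -, hP⟩ := h
  rw [hw, List.drop_left' hx, List.take_left' hu, hP]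

/-- The key shift lemma: if `P` and `P'` occur at `i < i'`, and the letters of `w` from
position `i+k-1` through `i'+k-1` are all equal to `a`, then `P'` also occurs at `i' - 1`. -/
lemma shift_core {w : List α} {P P' : Multiset α} {k i i' : ℕ} (hk : 1 ≤ k)
    (h1 : Occ w P k i) (h2 : Occ w P' k i') (hlt : i < i') (a : α)
    (hmid : w.take (i' + k) = w.take (i + k) ++ List.replicate (i' - i) a)
    (hlast : ∃ T0, w.take (i + k) = T0 ++ [a]) :
    Occ w P' k (i' - 1) := by
  obtain ⟨x, u, v, y, hw, hx, hu, hv, huv, hP⟩ := h1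
  obtain ⟨x', u', v', y', hw', hx', hu', hv', hu'v', hP'⟩ := h2
  set d := i' - i with hd
  have hd1 : 1 ≤ d := by omega
  have hTi : w.take (i + k) = x ++ u := by
    rw [hw, show x ++ (u ++ (v ++ y)) = (x ++ u) ++ (v ++ y) by simp,
      List.take_left' (by simp [hx, hu])]
  have hTi' : w.take (i' + k) = x' ++ u' := by
    rw [hw', show x' ++ (u' ++ (v' ++ y')) = (x' ++ u') ++ (v' ++ y') by simp,
      List.take_left' (by simp [hx', hu'])]
  have hDi' : w.drop (i' + k) = v' ++ y' := by
    rw [hw', show x' ++ (u' ++ (v' ++ y')) = (x' ++ u') ++ (v' ++ y') by simp,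
      List.drop_left' (by simp [hx', hu'])]
  have hx'u' : x' ++ u' = (x ++ u) ++ List.replicate d a := by
    rw [← hTi', hmid, hTi]
  rcases lt_or_ge d k with hdk | hdk
  · -- Case B : d < k, the two occurrences overlap
    set A := u.take d with hA
    set B := u.drop d with hB
    have hAlen : A.length = d := by simp [hA, hu]; omega
    have hBlen : B.length = k - d := by simp [hB, hu]
    have hxA : x' = x ++ A := by
      have e1 : x' = w.take i' := by
        rw [hw', List.take_left' hx']
      have e2 : w.take i' = x ++ A := by
        rw [hw, show i' = i + d by omega, ← hx, List.take_length_add_append,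
          List.take_append_of_le_length (by omega), hA]
      rw [e1, e2]
    have hu'B : u' = B ++ List.replicate d a := by
      have e : x' ++ u' = x' ++ (B ++ List.replicate d a) := by
        rw [hx'u', show u = A ++ B from (List.take_append_drop d u).symm, hxA]
        simp [List.append_assoc]
      exact List.append_cancel_left e
    have hvy : v ++ y = List.replicate d a ++ (v' ++ y') := by
      have e0 : w = (x ++ u) ++ (List.replicate d a ++ (v' ++ y')) := by
        conv_lhs => rw [← List.take_append_drop (i' + k) w]
        rw [hmid, hTi, hDi', List.append_assoc]
      have e1 : (x ++ u) ++ (v ++ y) = (x ++ u) ++ (List.replicate d a ++ (v' ++ y')) := by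
        rw [← e0, hw]; simp [List.append_assoc]
      exact List.append_cancel_left e1
    set D := v.drop d with hD
    have hDlen : D.length = k - d := by simp [hD, hv]
    have hvD : v = List.replicate d a ++ D := by
      have e : v.take d = List.replicate d a := by
        have e1 := congrArg (List.take d) hvy
        rw [List.take_append_of_le_length (by omega), List.take_left' (by simp)] at e1
        exact e1
      conv_lhs => rw [← List.take_append_drop d v]
      rw [e, hD]
    have hDy : D ++ y = v' ++ y' := by
      have e1 := congrArg (List.drop d) hvy
      rw [List.drop_append_of_le_length (by omega), List.drop_left' (by simp)] at e1
      exact e1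
    have hylen : d ≤ y.length := by
      have := congrArg List.length hDy
      simp only [List.length_append, hDlen, hv'] at this
      omega
    set E := y.take d with hE
    set yd := y.drop d with hyd
    have hElen : E.length = d := by simp [hE]; omega
    have hv'DE : v' = D ++ E := by
      have e1 := congrArg (List.take k) hDy
      rw [List.take_left' hv', show k = D.length + d by omega, List.take_length_add_append, ← hE] at e1
      exact e1.symm
    -- multiset computations
    have equ : (A : Multiset α) + (B : Multiset α) = Multiset.replicate d a + (D : Multiset α) := by
      have : ((A ++ B : List α) : Multiset α) = ((List.replicate d a ++ D : List α) : Multiset α) := by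
        rw [List.take_append_drop, ← hvD]; exact huv
      rw [← Multiset.coe_add, ← Multiset.coe_add, Multiset.coe_replicate] at this
      exact this
    have equ' : (B : Multiset α) + Multiset.replicate d a = (D : Multiset α) + (E : Multiset α) := by
      have : ((B ++ List.replicate d a : List α) : Multiset α) = ((D ++ E : List α) : Multiset α) := by
        rw [← hu'B, ← hv'DE]; exact hu'v'
      rw [← Multiset.coe_add, ← Multiset.coe_add, Multiset.coe_replicate] at this
      exact this
    have hAE : (A : Multiset α) + (E : Multiset α) =
        Multiset.replicate (d + d) a := by
      have h3 : ((A : Multiset α) + (E : Multiset α)) + ((B : Multiset α) + (D : Multiset α)) =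
          (Multiset.replicate d a + Multiset.replicate d a) +
            ((B : Multiset α) + (D : Multiset α)) := by
        calc ((A : Multiset α) + E) + ((B : Multiset α) + D)
            = ((A : Multiset α) + B) + ((D : Multiset α) + E) := by abel
          _ = (Multiset.replicate d a + (D : Multiset α)) +
              ((B : Multiset α) + Multiset.replicate d a) := by rw [equ, equ']
          _ = (Multiset.replicate d a + Multiset.replicate d a) +
              ((B : Multiset α) + (D : Multiset α)) := by abel
      have := add_right_cancel h3
      rw [this, Multiset.replicate_add]
    have hArep : A = List.replicate d a := by
      have := eq_replicate_of_coe_add (s := (E : Multiset α)) (N := d + d) (a := a) hAE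
      rwa [hAlen] at this
    have hErep : E = List.replicate d a := by
      have hEA : (E : Multiset α) + (A : Multiset α) = Multiset.replicate (d + d) a := by
        rw [add_comm]; exact hAE
      have := eq_replicate_of_coe_add (s := (A : Multiset α)) (N := d + d) (a := a) hEA
      rwa [hElen] at this
    -- build the shifted occurrence
    obtain ⟨e, he⟩ : ∃ e, d = e + 1 := ⟨d - 1, by omega⟩
    refine ⟨x ++ List.replicate e a, a :: (B ++ List.replicate e a),
      a :: (D ++ List.replicate e a), a :: yd, ?_, ?_, ?_, ?_, ?_, ?_⟩
    · rw [hw, show u = A ++ B from (List.take_append_drop d u).symm, hvD,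
        show y = E ++ yd from (List.take_append_drop d y).symm, hArep, hErep, he]
      simp only [List.replicate_succ, List.replicate_succ']
      simp [List.append_assoc, cons_replicate_swap]
    · simp only [List.length_append, List.length_replicate, hx]; omega
    · simp only [List.length_cons, List.length_append, List.length_replicate, hBlen]; omega
    · simp only [List.length_cons, List.length_append, List.length_replicate, hDlen]; omega
    · -- equal multisets of the two new halves
      have c1 : ((a :: (B ++ List.replicate e a) : List α) : Multiset α)
          = (B : Multiset α) + Multiset.replicate d a := by
        rw [← Multiset.cons_coe, ← Multiset.coe_add, Multiset.coe_replicate, he,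
          Multiset.replicate_succ]
        rw [← Multiset.singleton_add, ← Multiset.singleton_add]
        abel
      have c2 : ((a :: (D ++ List.replicate e a) : List α) : Multiset α)
          = (D : Multiset α) + Multiset.replicate d a := by
        rw [← Multiset.cons_coe, ← Multiset.coe_add, Multiset.coe_replicate, he,
          Multiset.replicate_succ]
        rw [← Multiset.singleton_add, ← Multiset.singleton_add]
        abel
      rw [c1, c2, equ']
      congr 1
      rw [hErep, Multiset.coe_replicate]
    · have c1 : ((a :: (B ++ List.replicate e a) : List α) : Multiset α)
          = (B : Multiset α) + Multiset.replicate d a := by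
        rw [← Multiset.cons_coe, ← Multiset.coe_add, Multiset.coe_replicate, he,
          Multiset.replicate_succ]
        rw [← Multiset.singleton_add, ← Multiset.singleton_add]
        abel
      rw [c1, ← hP', hu'B, ← Multiset.coe_add, Multiset.coe_replicate]
  · -- Case A : k ≤ d, disjoint occurrences
    have hrepsplit : List.replicate d a = List.replicate (d - k) a ++ List.replicate k a := by
      rw [← List.replicate_add]; congr 1; omega
    have hsplit : x' ++ u' = ((x ++ u) ++ List.replicate (d - k) a) ++ List.replicate k a := by
      rw [hx'u', hrepsplit]
      simp [List.append_assoc]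
    have hlen : x'.length = ((x ++ u) ++ List.replicate (d - k) a).length := by
      simp only [List.length_append, List.length_replicate, hx', hx, hu]; omega
    obtain ⟨hx'eq, hu'eq⟩ := List.append_inj hsplit hlen
    have hv'eq : v' = List.replicate k a := by
      have : (v' : Multiset α) + 0 = Multiset.replicate k a := by
        rw [add_zero, ← hu'v', hu'eq, Multiset.coe_replicate]
      have := eq_replicate_of_coe_add this
      rwa [hv'] at this
    obtain ⟨T0, hT0⟩ := hlast
    rw [hTi] at hT0
    have hx'form : x' = (T0 ++ List.replicate (d - k) a) ++ [a] := by
      calc x' = (T0 ++ [a]) ++ List.replicate (d - k) a := by rw [hx'eq, hT0]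
        _ = T0 ++ ([a] ++ List.replicate (d - k) a) := by rw [List.append_assoc]
        _ = T0 ++ (List.replicate (d - k) a ++ [a]) := by rw [singleton_append_replicate]
        _ = (T0 ++ List.replicate (d - k) a) ++ [a] := by rw [List.append_assoc]
    refine ⟨T0 ++ List.replicate (d - k) a, List.replicate k a, List.replicate k a,
      a :: y', ?_, ?_, ?_, ?_, rfl, ?_⟩
    · rw [hw', hu'eq, hv'eq, hx'form]
      simp [List.append_assoc, cons_replicate_swap]
    · have hT0len : T0.length + 1 = i + k := by
        have := congrArg List.length hT0
        simp only [List.length_append, List.length_singleton, hx, hu] at this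
        omega
      simp only [List.length_append, List.length_replicate]
      omega
    · simp
    · simp
    · rw [← hP', hu'eq, Multiset.coe_replicate]

/-- The finite set of Parikh vectors of halves of abelian squares of half-length `k` in `w`. -/
noncomputable def Fk (w : List α) (k : ℕ) : Finset (Multiset α) :=
  @Finset.filter _ (fun P => ∃ i, Occ w P k i) (Classical.decPred _)
    (w.sublists.toFinset.image (fun l : List α => (l : Multiset α)))

lemma mem_Fk {w : List α} {P : Multiset α} {k : ℕ} (hP : P ∈ Fk w k) : ∃ i, Occ w P k i := by
  classical
  rw [Fk] at hP
  simpa using (Finset.mem_filter.1 hP).2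

lemma mem_Fk_of {w : List α} {P : Multiset α} {k : ℕ}
    (h : ∃ i, Occ w P k i) : P ∈ Fk w k := by
  classical
  obtain ⟨i, x, u, v, y, hw, hx, hu, hv, huv, hP⟩ := h
  rw [Fk, Finset.mem_filter]
  constructor
  · simp only [Finset.mem_image, List.mem_toFinset, List.mem_sublists]
    refine ⟨u, ?_, hP⟩
    rw [hw]
    exact (List.sublist_append_left u (v ++ y)).trans (List.sublist_append_right _ _)
  · exact ⟨i, x, u, v, y, hw, hx, hu, hv, huv, hP⟩

lemma card_Fk (w : List α) (k : ℕ) (hk : 1 ≤ k) : (Fk w k).card ≤ numBlocks w := by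
  classical
  set f : Multiset α → ℕ :=
    fun P => numBlocks (w.take (sInf {i | Occ w P k i} + k)) with hf
  have hocc : ∀ P ∈ Fk w k, Occ w P k (sInf {i | Occ w P k i}) := by
    intro P hP
    exact Nat.sInf_mem (s := {i | Occ w P k i}) (mem_Fk hP)
  have hmaps : ∀ P ∈ Fk w k, f P ∈ Finset.Icc 1 (numBlocks w) := by
    intro P hP
    have h1 := (hocc P hP).length_le
    rw [Finset.mem_Icc, hf]
    constructor
    · apply one_le_numBlocks
      have : 0 < (w.take (sInf {i | Occ w P k i} + k)).length := by
        rw [List.length_take]; omega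
      exact List.ne_nil_of_length_pos this
    · calc numBlocks (w.take (sInf {i | Occ w P k i} + k))
          ≤ numBlocks (w.take (sInf {i | Occ w P k i} + k) ++
              w.drop (sInf {i | Occ w P k i} + k)) := numBlocks_le_append _ _
        _ = numBlocks w := by rw [List.take_append_drop]
  have hinj : Set.InjOn f (Fk w k : Set (Multiset α)) := by
    have main : ∀ P ∈ Fk w k, ∀ P' ∈ Fk w k,
        sInf {i | Occ w P k i} < sInf {i | Occ w P' k i} → f P = f P' → False := by
      intro P hP P' hP' hlt hfeq
      set iP := sInf {i | Occ w P k i} with hiP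
      set iP' := sInf {i | Occ w P' k i} with hiP'
      have hocc1 := hocc P hP
      have hocc2 := hocc P' hP'
      have hn2 := hocc2.length_le
      have hsplit : w.take (iP' + k) = w.take (iP + k) ++ (w.drop (iP + k)).take (iP' - iP) := by
        rw [show iP' + k = (iP + k) + (iP' - iP) by omega, List.take_add]
      have hmidlen : ((w.drop (iP + k)).take (iP' - iP)).length = iP' - iP := by
        rw [List.length_take, List.length_drop]
        omega
      have hne : w.take (iP + k) ≠ [] := by
        apply List.ne_nil_of_length_pos
        rw [List.length_take]
        have := hocc1.length_le
        omega
      have hnb : numBlocks (w.take (iP + k) ++ (w.drop (iP + k)).take (iP' - iP))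
          = numBlocks (w.take (iP + k)) := by
        rw [← hsplit]
        exact hfeq.symm
      obtain ⟨a, hlast, hmid⟩ := numBlocks_key hne hnb
      rw [hmidlen] at hmid
      have hshift := shift_core hk hocc1 hocc2 hlt a (by rw [hsplit, hmid]) hlast
      have : iP' ≤ iP' - 1 := Nat.sInf_le hshift
      omega
    intro P hP P' hP' hfeq
    by_contra hne
    rcases Nat.lt_trichotomy (sInf {i | Occ w P k i}) (sInf {i | Occ w P' k i}) with h | h | h
    · exact main P (by simpa using hP) P' (by simpa using hP') h hfeq
    · apply hne
      have h1 : Occ w P k (sInf {i | Occ w P k i}) := hocc P (by simpa using hP)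
      have h2 : Occ w P' k (sInf {i | Occ w P k i}) := by rw [h]; exact hocc P' (by simpa using hP')
      rw [h1.parikh_eq, h2.parikh_eq]
    · exact main P' (by simpa using hP') P (by simpa using hP) h hfeq.symm
  calc (Fk w k).card ≤ (Finset.Icc 1 (numBlocks w)).card :=
        Finset.card_le_card_of_injOn f hmaps hinj
    _ = numBlocks w := by rw [Nat.card_Icc]; omega

end AbelianSquares

open AbelianSquares in
/-- A word `w` of length `n` with exactly `m` blocks contains at most `nm/2`
Abelian-nonequivalent Abelian squares, counted as the number of distinct Parikh vectors
`P(u)` arising from fragments of `w` of the form `u ++ v` with `|u| = |v| ≥ 1` and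
`P(u) = P(v)`. -/
theorem abelian_nonequivalent_squares_le_blocks {α : Type*} [DecidableEq α]
    (w : List α) (n m : ℕ) (hn : w.length = n) (hm : numBlocks w = m) :
    ({P : Multiset α | ∃ x u v y : List α, w = x ++ u ++ v ++ y ∧
        u.length = v.length ∧ 1 ≤ u.length ∧
        (u : Multiset α) = (v : Multiset α) ∧ (u : Multiset α) = P}.ncard : ℝ) ≤
      (n : ℝ) * (m : ℝ) / 2 := by
  classical
  subst hn hm
  set S := {P : Multiset α | ∃ x u v y : List α, w = x ++ u ++ v ++ y ∧
      u.length = v.length ∧ 1 ≤ u.length ∧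
      (u : Multiset α) = (v : Multiset α) ∧ (u : Multiset α) = P} with hS
  have hsub : S ⊆ ((Finset.Icc 1 (w.length / 2)).biUnion (fun k => Fk w k) : Finset (Multiset α)) := by
    rintro P ⟨x, u, v, y, hw, hlen, h1, huv, hP⟩
    have hwlen : w.length = x.length + u.length + v.length + y.length := by
      rw [hw]; simp [List.length_append]; omega
    refine Finset.mem_coe.2 (Finset.mem_biUnion.2 ⟨u.length, ?_, mem_Fk_of
      ⟨x.length, x, u, v, y, ?_, rfl, rfl, hlen.symm, huv, hP⟩⟩)
    · rw [Finset.mem_Icc]; omega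
    · rw [hw]; simp [List.append_assoc]
  have h1 : S.ncard ≤ ((Finset.Icc 1 (w.length / 2)).biUnion (fun k => Fk w k)).card := by
    rw [← Set.ncard_coe_finset]
    exact Set.ncard_le_ncard hsub (Finset.finite_toSet _)
  have h2 : ((Finset.Icc 1 (w.length / 2)).biUnion (fun k => Fk w k)).card ≤
      (Finset.Icc 1 (w.length / 2)).card * numBlocks w :=
    Finset.card_biUnion_le_card_mul _ _ _ (fun k hk => card_Fk w k (Finset.mem_Icc.1 hk).1)
  have h3 : (Finset.Icc 1 (w.length / 2)).card = w.length / 2 := by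
    rw [Nat.card_Icc]; omega
  have hfin : S.ncard ≤ (w.length / 2) * numBlocks w := by
    rw [← h3]; exact h1.trans h2
  have hcast : (S.ncard : ℝ) ≤ ((w.length / 2 : ℕ) : ℝ) * (numBlocks w : ℝ) := by
    exact_mod_cast hfin
  calc (S.ncard : ℝ) ≤ ((w.length / 2 : ℕ) : ℝ) * (numBlocks w : ℝ) := hcast
    _ ≤ ((w.length : ℝ) / 2) * (numBlocks w : ℝ) := by
        apply mul_le_mul_of_nonneg_right _ (by positivity)
        exact_mod_cast Nat.cast_div_le
    _ = (w.length : ℝ) * (numBlocks w : ℝ) / 2 := by ring
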